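/- A finite product of topological groups, each having the automatic continuity property, has the automatic continuity property. -/

import Mathlib

/-- A topological group has the automatic continuity property if every group
homomorphism to a separable topological group is continuous. -/
def HasAutomaticContinuity (G : Type) [Group G] [TopologicalSpace G] : Prop :=
  ∀ (H : Type) [Group H] [TopologicalSpace H] [IsTopologicalGroup H]
    [TopologicalSpace.SeparableSpace H] (f : G →* H), Continuous f

lemma continuous_noncommProd {X ι M : Type*} [TopologicalSpace X] [Monoid M]
    [TopologicalSpace M] [ContinuousMul M] (s : Finset ι) (g : ι → X → M)
    (comm : ∀ x : X, {i | i ∈ s}.Pairwise fun i j => Commute (g i x) (g j x))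
    (hg : ∀ i ∈ s, Continuous (g i)) :
    Continuous fun x => s.noncommProd (fun i => g i x) (comm x) := by
  induction s using Finset.cons_induction with
  | empty => simpa using continuous_const
  | cons a s ha ih =>
    simp only [Finset.noncommProd_cons]
    exact (hg a (Finset.mem_cons_self a s)).mul
      (ih (fun x => (comm x).mono fun i hi => Finset.mem_cons_of_mem hi)
        fun i hi => hg i (Finset.mem_cons_of_mem hi))

/-- A finite product of topological groups, each with the automatic continuity
property, has the automatic continuity property. -/
theorem stmt_15 {ι : Type} [Finite ι] (G : ι → Type)
    [∀ i, Group (G i)] [∀ i, TopologicalSpace (G i)] [∀ i, IsTopologicalGroup (G i)]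
    (h : ∀ i, HasAutomaticContinuity (G i)) :
    HasAutomaticContinuity (∀ i, G i) := by
  intro H _ _ _ _ f
  cases nonempty_fintype ι
  classical
  have comm : ∀ x : ∀ i, G i, ({i | i ∈ (Finset.univ : Finset ι)} : Set ι).Pairwise
      fun i j => Commute (f (Pi.mulSingle i (x i))) (f (Pi.mulSingle j (x j))) :=
    fun x i _ j _ _ => (Pi.mulSingle_apply_commute x i j).map f
  have hx : ⇑f = fun x : ∀ i, G i =>
      Finset.univ.noncommProd (fun i => f (Pi.mulSingle i (x i))) (comm x) := by
    funext x
    conv_lhs => rw [← Finset.noncommProd_mulSingle x]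
    exact Finset.univ.map_noncommProd _ _ f
  rw [hx]
  exact continuous_noncommProd _ _ comm fun i _ =>
    (h i H (f.comp (MonoidHom.mulSingle G i))).comp (continuous_apply i)
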